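/- Let S ⊆ M_N(W) be a ∂_q-invariant subalgebra with p·S ⊆ S, where W is the first Weyl algebra over an algebraically closed field k of characteristic zero. If S acts irreducibly on V_N = (k[p])^N, then S is dense in M_N(W) with respect to the q-topology: for every element x ∈ M_N(W) and every n ≥ 0 there exists s ∈ S with x - s ∈ M_N(W)·q^n. -/

import Mathlib

open Polynomial

set_option synthInstance.maxHeartbeats 1000000
set_option maxHeartbeats 1000000

noncomputable section

variable (k : Type*) [Field k] [CharZero k]

/-- The operator `p`: multiplication by `X` on `k[X]`. -/
def pOp : Module.End k (Polynomial k) := LinearMap.mulLeft k (X : Polynomial k)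

/-- The operator `q = d/dX` on `k[X]`. -/
def qOp : Module.End k (Polynomial k) := derivative

/-- The (first) Weyl algebra, realized concretely as the subalgebra of
`End_k(k[X])` generated by multiplication by `X` and `d/dX`.  (In characteristic
zero this is a faithful model of `k⟨p,q | qp - pq = 1⟩`.) -/
def WeylA : Subalgebra k (Module.End k (Polynomial k)) :=
  Algebra.adjoin k {pOp k, qOp k}

/-- The element `p` of the Weyl algebra. -/
def pW : WeylA k := ⟨pOp k, Algebra.subset_adjoin (Set.mem_insert _ _)⟩

/-- The element `q` of the Weyl algebra. -/
def qW : WeylA k := ⟨qOp k, Algebra.subset_adjoin (Set.mem_insert_of_mem _ rfl)⟩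

variable (N : ℕ)

/-- `M_N(W)`, the `N×N` matrices over the Weyl algebra. -/
abbrev MW := Matrix (Fin N) (Fin N) (WeylA k)

/-- The scalar matrix `p·Id_N`. -/
def pM : MW k N := Matrix.diagonal fun _ => pW k

/-- The scalar matrix `q·Id_N`. -/
def qM : MW k N := Matrix.diagonal fun _ => qW k

/-- The derivation `∂_q(a) = [a,p]` on `M_N(W)`. -/
def dq (a : MW k N) : MW k N := a * pM k N - pM k N * a

/-- Evaluation of a polynomial at `p`, i.e. the embedding `k[p] → W`. -/
def polyP : Polynomial k →ₐ[k] WeylA k := Polynomial.aeval (pW k)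

/-- Evaluation of a polynomial at `q`, i.e. the embedding `k[q] → W`. -/
def polyQ : Polynomial k →ₐ[k] WeylA k := Polynomial.aeval (qW k)


/-- The canonical action of `M_N(W)` on `V_N = (k[p])^N`. -/
def act (N : ℕ) (a : MW k N) (v : Fin N → Polynomial k) : Fin N → Polynomial k :=
  fun i => ∑ j, (a i j : Module.End k (Polynomial k)) (v j)

namespace Density

variable {k : Type*} [Field k] [CharZero k]

lemma aeval_pOp (f : Polynomial k) :
    Polynomial.aeval (pOp k) f = LinearMap.mulLeft k f := by
  have hX : pOp k = Algebra.lmul k (Polynomial k) X := by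
    ext g; rfl
  rw [hX, Polynomial.aeval_algHom_apply, Polynomial.aeval_X_left_apply]
  ext g; rfl

lemma coe_polyP (f : Polynomial k) :
    ((polyP k f : WeylA k) : Module.End k (Polynomial k)) = LinearMap.mulLeft k f := by
  have : ((polyP k f : WeylA k) : Module.End k (Polynomial k))
      = Polynomial.aeval ((pW k : WeylA k) : Module.End k (Polynomial k)) f := by
    exact (Polynomial.aeval_algHom_apply ((WeylA k).val) (pW k) f).symm
  rw [this]
  exact aeval_pOp f

lemma polyP_apply (f g : Polynomial k) :
    ((polyP k f : WeylA k) : Module.End k (Polynomial k)) g = f * g := by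
  rw [coe_polyP]; rfl

lemma qOp_mulLeft (f : Polynomial k) :
    qOp k * LinearMap.mulLeft k f
      = LinearMap.mulLeft k f * qOp k + LinearMap.mulLeft k (Polynomial.derivative f) := by
  apply LinearMap.ext; intro g
  simp only [Module.End.mul_apply, LinearMap.add_apply, LinearMap.mulLeft_apply]
  show Polynomial.derivative (f * g) = f * Polynomial.derivative g + Polynomial.derivative f * g
  rw [Polynomial.derivative_mul]; ring

/-- decomposition predicate: `x = f(p) + u·q`. -/
def IsDec (x : Module.End k (Polynomial k)) : Prop :=
  ∃ f : Polynomial k, ∃ u : WeylA k,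
    x = LinearMap.mulLeft k f + (u : Module.End k (Polynomial k)) * qOp k

lemma IsDec.add {x y : Module.End k (Polynomial k)} (hx : IsDec x) (hy : IsDec y) :
    IsDec (x + y) := by
  obtain ⟨f₁, u₁, rfl⟩ := hx
  obtain ⟨f₂, u₂, rfl⟩ := hy
  refine ⟨f₁ + f₂, u₁ + u₂, ?_⟩
  apply LinearMap.ext; intro g
  simp only [LinearMap.add_apply, LinearMap.mulLeft_apply, Module.End.mul_apply,
    Subalgebra.coe_add, add_mul]
  abel

lemma mulLeft_mul' (f₁ f₂ : Polynomial k) :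
    LinearMap.mulLeft k f₁ * LinearMap.mulLeft k f₂ = LinearMap.mulLeft k (f₁ * f₂) := by
  apply LinearMap.ext; intro g
  simp [Module.End.mul_apply, mul_assoc]

lemma isDec_mul {w : Module.End k (Polynomial k)} (hw : w ∈ WeylA k) :
    ∀ x : Module.End k (Polynomial k), IsDec x → IsDec (w * x) := by
  induction hw using Algebra.adjoin_induction with
  | mem w hw =>
      rcases hw with h | h
      · -- w = pOp
        subst h
        rintro x ⟨f, u, rfl⟩
        refine ⟨X * f, pW k * u, ?_⟩
        have h1 : pOp k * LinearMap.mulLeft k f = LinearMap.mulLeft k (X * f) := by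
          rw [show pOp k = LinearMap.mulLeft k X from rfl, mulLeft_mul']
        have h2 : ((pW k * u : WeylA k) : Module.End k (Polynomial k))
            = pOp k * (u : Module.End k (Polynomial k)) := rfl
        rw [mul_add, h1, h2, mul_assoc]
      · -- w = qOp
        simp only [Set.mem_singleton_iff] at h
        subst h
        rintro x ⟨f, u, rfl⟩
        refine ⟨Polynomial.derivative f, polyP k f + qW k * u, ?_⟩
        rw [mul_add, qOp_mulLeft, ← mul_assoc]
        have hc : ((polyP k f + qW k * u : WeylA k) : Module.End k (Polynomial k))
            = LinearMap.mulLeft k f + qOp k * (u : Module.End k (Polynomial k)) := by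
          rw [Subalgebra.coe_add, MulMemClass.coe_mul, coe_polyP]; rfl
        rw [hc, add_mul]
        abel
  | algebraMap r =>
      rintro x ⟨f, u, rfl⟩
      refine ⟨Polynomial.C r * f, algebraMap k (WeylA k) r * u, ?_⟩
      have ha : algebraMap k (Module.End k (Polynomial k)) r = LinearMap.mulLeft k (Polynomial.C r) := by
        ext g
        simp [Module.algebraMap_end_apply, Polynomial.smul_eq_C_mul]
      rw [ha, mul_add, ← mul_assoc, mulLeft_mul']
      congr 1
      have : ((algebraMap k (WeylA k) r * u : WeylA k) : Module.End k (Polynomial k))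
          = LinearMap.mulLeft k (Polynomial.C r) * (u : Module.End k (Polynomial k)) := by
        rw [MulMemClass.coe_mul,
          show ((algebraMap k (WeylA k) r : WeylA k) : Module.End k (Polynomial k))
            = algebraMap k (Module.End k (Polynomial k)) r from rfl, ha]
      rw [this]
  | add x y hx hy ihx ihy =>
      intro t ht
      rw [add_mul]
      exact (ihx t ht).add (ihy t ht)
  | mul x y hx hy ihx ihy =>
      intro t ht
      rw [mul_assoc]
      exact ihx _ (ihy t ht)

lemma exists_dec (w : WeylA k) :
    ∃ f : Polynomial k, ∃ u : WeylA k, w = polyP k f + u * qW k := by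
  have h1 : IsDec (1 : Module.End k (Polynomial k)) := by
    refine ⟨1, 0, ?_⟩
    apply LinearMap.ext; intro g
    simp
  have := isDec_mul w.2 1 h1
  rw [mul_one] at this
  obtain ⟨f, u, hw⟩ := this
  refine ⟨f, u, ?_⟩
  apply Subtype.ext
  rw [Subalgebra.coe_add, MulMemClass.coe_mul, coe_polyP]
  exact hw

lemma kills_imp_qpow (n : ℕ) :
    ∀ w : WeylA k, (∀ m, m < n → (w : Module.End k (Polynomial k)) (X ^ m) = 0) →
      ∃ u : WeylA k, w = u * (qW k) ^ n := by
  induction n with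
  | zero => intro w _; exact ⟨w, by simp⟩
  | succ n ih =>
      intro w h
      obtain ⟨f, u, hw⟩ := exists_dec w
      have hf : f = 0 := by
        have h0 := h 0 (Nat.succ_pos n)
        rw [pow_zero, hw] at h0
        have : ((polyP k f + u * qW k : WeylA k) : Module.End k (Polynomial k)) (1 : Polynomial k)
            = f := by
          rw [Subalgebra.coe_add, MulMemClass.coe_mul]
          simp only [LinearMap.add_apply, Module.End.mul_apply]
          rw [polyP_apply]
          have : (qW k : Module.End k (Polynomial k)) (1 : Polynomial k) = 0 := by
            show Polynomial.derivative (1 : Polynomial k) = 0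
            simp
          rw [this, map_zero, mul_one, add_zero]
        rw [this] at h0
        exact h0
      rw [hf, map_zero, zero_add] at hw
      have hu : ∀ m, m < n → (u : Module.End k (Polynomial k)) (X ^ m) = 0 := by
        intro m hm
        have h1 := h (m + 1) (by omega)
        rw [hw] at h1
        have : ((u * qW k : WeylA k) : Module.End k (Polynomial k)) (X ^ (m + 1))
            = ((m : k) + 1) • (u : Module.End k (Polynomial k)) (X ^ m) := by
          rw [MulMemClass.coe_mul]
          simp only [Module.End.mul_apply]
          have hq : (qW k : Module.End k (Polynomial k)) (X ^ (m + 1))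
              = ((m : k) + 1) • (X ^ m : Polynomial k) := by
            show Polynomial.derivative (X ^ (m + 1) : Polynomial k) = _
            rw [Polynomial.derivative_X_pow]
            simp [Polynomial.smul_eq_C_mul]
          rw [hq, map_smul]
        rw [this] at h1
        have hne : ((m : k) + 1) ≠ 0 := by
          exact_mod_cast (Nat.cast_ne_zero (R := k)).mpr (Nat.succ_ne_zero m)
        exact (smul_eq_zero.mp h1).resolve_left hne
      obtain ⟨y, hy⟩ := ih u hu
      refine ⟨y, ?_⟩
      rw [hw, hy, pow_succ, mul_assoc]

end Density
namespace Density

variable {k : Type*} [Field k] [CharZero k] {N : ℕ}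

abbrev V (k : Type*) [Field k] (N : ℕ) := Fin N → Polynomial k

lemma act_add (a b : MW k N) (v : V k N) :
    act k N (a + b) v = act k N a v + act k N b v := by
  funext i
  simp [act, Finset.sum_add_distrib]

lemma act_smul (c : k) (a : MW k N) (v : V k N) :
    act k N (c • a) v = c • act k N a v := by
  funext i
  simp [act, Finset.smul_sum]

lemma act_zero (v : V k N) : act k N (0 : MW k N) v = 0 := by
  funext i; simp [act]

lemma act_sub (a b : MW k N) (v : V k N) :
    act k N (a - b) v = act k N a v - act k N b v := by
  funext i
  simp [act, Finset.sum_sub_distrib]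

lemma act_vadd (a : MW k N) (v w : V k N) :
    act k N a (v + w) = act k N a v + act k N a w := by
  funext i
  simp [act, Finset.sum_add_distrib]

lemma act_vsmul (a : MW k N) (c : k) (v : V k N) :
    act k N a (c • v) = c • act k N a v := by
  funext i
  simp [act, Finset.smul_sum]

lemma act_vzero (a : MW k N) : act k N a (0 : V k N) = 0 := by
  funext i; simp [act]

lemma act_vsub (a : MW k N) (v w : V k N) :
    act k N a (v - w) = act k N a v - act k N a w := by
  funext i
  simp [act, Finset.sum_sub_distrib]

lemma act_mul (a b : MW k N) (v : V k N) :
    act k N (a * b) v = act k N a (act k N b v) := by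
  funext i
  show ∑ j, (((a * b) i j : WeylA k) : Module.End k (Polynomial k)) (v j) = _
  have hterm : ∀ j, (((a * b) i j : WeylA k) : Module.End k (Polynomial k)) (v j)
      = ∑ l, ((a i l : WeylA k) : Module.End k (Polynomial k))
          (((b l j : WeylA k) : Module.End k (Polynomial k)) (v j)) := by
    intro j
    rw [Matrix.mul_apply]
    rw [show ((∑ l, a i l * b l j : WeylA k) : Module.End k (Polynomial k))
        = ∑ l, ((a i l : WeylA k) : Module.End k (Polynomial k))
            * ((b l j : WeylA k) : Module.End k (Polynomial k)) by push_cast; rfl]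
    simp [LinearMap.sum_apply, Module.End.mul_apply]
  simp only [hterm]
  rw [Finset.sum_comm]
  show _ = ∑ l, ((a i l : WeylA k) : Module.End k (Polynomial k)) (act k N b v l)
  congr 1
  funext l
  rw [show act k N b v l = ∑ j, ((b l j : WeylA k) : Module.End k (Polynomial k)) (v j) from rfl,
    map_sum]

lemma act_sum {ι : Type*} (s : Finset ι) (f : ι → MW k N) (v : V k N) :
    act k N (∑ i ∈ s, f i) v = ∑ i ∈ s, act k N (f i) v := by
  classical
  induction s using Finset.induction_on with
  | empty => simp [act_zero]
  | insert a s h ih => rw [Finset.sum_insert h, Finset.sum_insert h, act_add, ih]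

lemma act_pM (a : MW k N) (v : V k N) :
    act k N (pM k N * a) v = fun i => (X : Polynomial k) * act k N a v i := by
  funext i
  show ∑ j, (((pM k N * a) i j : WeylA k) : Module.End k (Polynomial k)) (v j) = _
  have : ∀ j, ((pM k N * a) i j : WeylA k) = pW k * a i j := by
    intro j
    rw [pM, Matrix.diagonal_mul]
  simp only [this, MulMemClass.coe_mul, Module.End.mul_apply]
  rw [show act k N a v i = ∑ j, ((a i j : WeylA k) : Module.End k (Polynomial k)) (v j) from rfl,
    Finset.mul_sum]
  rfl

lemma act_single (a : MW k N) (j : Fin N) (p : Polynomial k) (i : Fin N) :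
    act k N a (Pi.single j p) i = ((a i j : WeylA k) : Module.End k (Polynomial k)) p := by
  simp only [act]
  rw [Finset.sum_eq_single j]
  · rw [Pi.single_eq_same]
  · intro b _ hb
    rw [Pi.single_eq_of_ne hb, map_zero]
  · intro h; exact absurd (Finset.mem_univ j) h

lemma matrix_kills_imp_qpow (n : ℕ) (a : MW k N)
    (h : ∀ i j : Fin N, ∀ m, m < n →
      ((a i j : WeylA k) : Module.End k (Polynomial k)) (X ^ m) = 0) :
    ∃ y : MW k N, a = y * (qM k N) ^ n := by
  choose u hu using fun i j => kills_imp_qpow n (a i j) (h i j)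
  refine ⟨Matrix.of u, ?_⟩
  rw [qM, Matrix.diagonal_pow]
  refine Matrix.ext (fun i j => ?_)
  rw [Matrix.mul_diagonal]
  exact hu i j

end Density
namespace Density

variable {k : Type*} [Field k] [CharZero k] {N : ℕ}

lemma acts_faithful (hN : 0 < N) (S : NonUnitalSubalgebra k (MW k N))
    (hirr : ∀ U : Submodule k (V k N),
      (∀ a ∈ S, ∀ u ∈ U, act k N a u ∈ U) → U = ⊥ ∨ U = ⊤) :
    ∀ v : V k N, (∀ s ∈ S, act k N s v = 0) → v = 0 := by
  classical
  let K : Submodule k (V k N) :=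
    { carrier := {v | ∀ s ∈ S, act k N s v = 0}
      add_mem' := fun {a b} ha hb => by
        intro s hs
        show act k N s (a + b) = 0
        rw [act_vadd, ha s hs, hb s hs, add_zero]
      zero_mem' := fun s hs => act_vzero s
      smul_mem' := fun c a ha => by
        intro s hs
        show act k N s (c • a) = 0
        rw [act_vsmul, ha s hs, smul_zero] }
  have hKmem : ∀ u : V k N, u ∈ K ↔ ∀ s ∈ S, act k N s u = 0 := fun u => Iff.rfl
  have hKinv : ∀ a ∈ S, ∀ u ∈ K, act k N a u ∈ K := by
    intro a ha u hu
    rw [hKmem]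
    intro s hs
    rw [← act_mul]
    exact (hKmem u).mp hu (s * a) (mul_mem hs ha)
  intro v hv
  rcases hirr K hKinv with hbot | htop
  · have : v ∈ K := (hKmem v).mpr hv
    rw [hbot] at this
    simpa using this
  · exfalso
    have hall : ∀ (w : V k N), ∀ s ∈ S, act k N s w = 0 := by
      intro w
      exact (hKmem w).mp (htop ▸ Submodule.mem_top)
    set i0 : Fin N := ⟨0, hN⟩
    set U0 : Submodule k (V k N) := Submodule.span k {Pi.single i0 (1 : Polynomial k)} with hU0
    have hU0inv : ∀ a ∈ S, ∀ u ∈ U0, act k N a u ∈ U0 := by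
      intro a ha u _
      rw [hall u a ha]
      exact U0.zero_mem
    rcases hirr U0 hU0inv with h1 | h2
    · have hm : Pi.single i0 (1 : Polynomial k) ∈ U0 := Submodule.mem_span_singleton_self _
      rw [h1] at hm
      have h1ne : (Pi.single i0 (1 : Polynomial k) : V k N) ≠ 0 := by
        intro hcon
        have := congrFun hcon i0
        rw [Pi.single_eq_same] at this
        simp at this
      exact h1ne (by simpa using hm)
    · have hm : Pi.single i0 (X : Polynomial k) ∈ U0 := h2 ▸ Submodule.mem_top
      rw [hU0, Submodule.mem_span_singleton] at hm
      obtain ⟨c, hc⟩ := hm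
      have hc0 := congrFun hc i0
      rw [Pi.smul_apply, Pi.single_eq_same, Pi.single_eq_same] at hc0
      have : Polynomial.C c = X := by
        rw [← hc0, Polynomial.smul_eq_C_mul, mul_one]
      exact Polynomial.X_ne_C c this.symm

lemma Sv_top (hN : 0 < N) (S : NonUnitalSubalgebra k (MW k N))
    (hirr : ∀ U : Submodule k (V k N),
      (∀ a ∈ S, ∀ u ∈ U, act k N a u ∈ U) → U = ⊥ ∨ U = ⊤)
    (v : V k N) (hv : v ≠ 0) : ∀ w : V k N, ∃ s ∈ S, act k N s v = w := by
  classical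
  let U : Submodule k (V k N) :=
    { carrier := {w | ∃ s ∈ S, act k N s v = w}
      add_mem' := by
        rintro a b ⟨s, hs, hsv⟩ ⟨t, ht, htv⟩
        exact ⟨s + t, add_mem hs ht, by rw [act_add, hsv, htv]⟩
      zero_mem' := ⟨0, zero_mem S, act_zero v⟩
      smul_mem' := by
        rintro c a ⟨s, hs, hsv⟩
        exact ⟨c • s, SMulMemClass.smul_mem c hs, by rw [act_smul, hsv]⟩ }
  have hUmem : ∀ w : V k N, w ∈ U ↔ ∃ s ∈ S, act k N s v = w := fun w => Iff.rfl
  have hUinv : ∀ a ∈ S, ∀ u ∈ U, act k N a u ∈ U := by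
    intro a ha u hu
    obtain ⟨s, hs, rfl⟩ := (hUmem u).mp hu
    exact (hUmem _).mpr ⟨a * s, mul_mem ha hs, act_mul a s v⟩
  rcases hirr U hUinv with hbot | htop
  · exfalso
    apply hv
    apply acts_faithful hN S hirr v
    intro s hs
    have : act k N s v ∈ U := (hUmem _).mpr ⟨s, hs, rfl⟩
    rw [hbot] at this
    simpa using this
  · intro w
    exact (hUmem w).mp (htop ▸ Submodule.mem_top)

end Density
namespace Density

variable {k : Type*} [Field k] [CharZero k] {N : ℕ}

lemma theta_zero (θ : V k N → V k N)
    (hsmul : ∀ (c : k) v, θ (c • v) = c • θ v) : θ 0 = 0 := by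
  have := hsmul 0 0
  simpa using this

lemma theta_sub (θ : V k N → V k N)
    (hadd : ∀ v w, θ (v + w) = θ v + θ w)
    (hsmul : ∀ (c : k) v, θ (c • v) = c • θ v) (a b : V k N) :
    θ (a - b) = θ a - θ b := by
  have hneg : θ (-b) = -θ b := by
    have := hsmul (-1) b
    simpa using this
  rw [sub_eq_add_neg, hadd, hneg, sub_eq_add_neg]

lemma theta_sum (θ : V k N → V k N)
    (hadd : ∀ v w, θ (v + w) = θ v + θ w)
    (hsmul : ∀ (c : k) v, θ (c • v) = c • θ v)
    {ι : Type*} (s : Finset ι) (f : ι → V k N) :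
    θ (∑ i ∈ s, f i) = ∑ i ∈ s, θ (f i) := by
  classical
  induction s using Finset.induction_on with
  | empty => simpa using theta_zero θ hsmul
  | insert a s h ih =>
      rw [Finset.sum_insert h, Finset.sum_insert h, hadd, ih]

lemma pi_decomp (v : V k N) :
    v = ∑ j, (v j) • (Pi.single j (1 : Polynomial k) : V k N) := by
  funext i
  rw [Finset.sum_apply]
  have : ∀ j, ((v j) • (Pi.single j (1 : Polynomial k) : V k N)) i
      = if i = j then v i else 0 := by
    intro j
    rw [Pi.smul_apply, Pi.single_apply]
    split
    · rename_i h; subst h; simp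
    · simp
  simp only [this]
  simp

section Commutant

variable (hN : 0 < N) (S : NonUnitalSubalgebra k (MW k N))
  (hirr : ∀ U : Submodule k (V k N),
      (∀ a ∈ S, ∀ u ∈ U, act k N a u ∈ U) → U = ⊥ ∨ U = ⊤)
  (hpS : ∀ a ∈ S, pM k N * a ∈ S)

include hN hirr hpS in
lemma comm_X_smul (θ : V k N → V k N)
    (hcomm : ∀ s ∈ S, ∀ v, θ (act k N s v) = act k N s (θ v)) :
    ∀ v, θ ((X : Polynomial k) • v) = (X : Polynomial k) • θ v := by
  intro v
  have he0 : (Pi.single (⟨0, hN⟩ : Fin N) (1 : Polynomial k) : V k N) ≠ 0 := by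
    intro hcon
    have := congrFun hcon ⟨0, hN⟩
    rw [Pi.single_eq_same] at this
    simp at this
  obtain ⟨s, hs, hsv⟩ := Sv_top hN S hirr _ he0 v
  have hXact : ∀ (b : MW k N) (w : V k N),
      (X : Polynomial k) • act k N b w = act k N (pM k N * b) w := by
    intro b w
    rw [act_pM]
    funext i
    rw [Pi.smul_apply, smul_eq_mul]
  rw [← hsv, hXact, hcomm _ (hpS s hs), hcomm s hs, hXact]

include hN hirr hpS in
lemma comm_poly_smul (θ : V k N → V k N)
    (hadd : ∀ v w, θ (v + w) = θ v + θ w)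
    (hsmul : ∀ (c : k) v, θ (c • v) = c • θ v)
    (hcomm : ∀ s ∈ S, ∀ v, θ (act k N s v) = act k N s (θ v)) :
    ∀ (f : Polynomial k) (v : V k N), θ (f • v) = f • θ v := by
  have hX := comm_X_smul hN S hirr hpS θ hcomm
  have hXpow : ∀ (m : ℕ) (v : V k N),
      θ (((X : Polynomial k) ^ m) • v) = ((X : Polynomial k) ^ m) • θ v := by
    intro m
    induction m with
    | zero => intro v; simp
    | succ m ih =>
        intro v
        rw [pow_succ', mul_smul, hX, ih, ← mul_smul, ← pow_succ']
  intro f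
  induction f using Polynomial.induction_on' with
  | add p q hp hq =>
      intro v
      rw [add_smul, hadd, hp, hq, add_smul]
  | monomial m c =>
      intro v
      rw [← Polynomial.C_mul_X_pow_eq_monomial, mul_smul, mul_smul]
      have hC : ∀ w : V k N, θ ((Polynomial.C c) • w) = (Polynomial.C c) • w → True := fun _ _ => trivial
      have hCs : ∀ w : V k N, (Polynomial.C c) • w = c • w := by
        intro w
        funext i
        rw [Pi.smul_apply, Pi.smul_apply, Polynomial.smul_eq_C_mul, smul_eq_mul]
      rw [hCs, hsmul, hXpow, hCs]

include hN hirr hpS in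
lemma comm_matrix_repr (θ : V k N → V k N)
    (hadd : ∀ v w, θ (v + w) = θ v + θ w)
    (hsmul : ∀ (c : k) v, θ (c • v) = c • θ v)
    (hcomm : ∀ s ∈ S, ∀ v, θ (act k N s v) = act k N s (θ v)) :
    ∀ (v : V k N) (i : Fin N), θ v i = ∑ j, v j * θ (Pi.single j (1 : Polynomial k)) i := by
  intro v i
  conv_lhs => rw [pi_decomp v]
  rw [theta_sum θ hadd hsmul]
  rw [Finset.sum_apply]
  congr 1
  funext j
  rw [comm_poly_smul hN S hirr hpS θ hadd hsmul hcomm, Pi.smul_apply, smul_eq_mul]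

end Commutant

end Density
namespace Density

variable {k : Type*} [Field k] [CharZero k] {N : ℕ}

lemma commutant_scalar [IsAlgClosed k] (hN : 0 < N) (S : NonUnitalSubalgebra k (MW k N))
    (hirr : ∀ U : Submodule k (V k N),
      (∀ a ∈ S, ∀ u ∈ U, act k N a u ∈ U) → U = ⊥ ∨ U = ⊤)
    (hpS : ∀ a ∈ S, pM k N * a ∈ S)
    (φ : V k N → V k N)
    (hadd : ∀ v w, φ (v + w) = φ v + φ w)
    (hsmul : ∀ (c : k) v, φ (c • v) = c • φ v)
    (hcomm : ∀ s ∈ S, ∀ v, φ (act k N s v) = act k N s (φ v)) :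
    ∃ c : k, ∀ v, φ v = c • v := by
  classical
  haveI : Nonempty (Fin N) := ⟨⟨0, hN⟩⟩
  -- the matrix of φ evaluated at 0
  set B0 : Matrix (Fin N) (Fin N) k :=
    Matrix.of (fun i j => (φ (Pi.single j (1 : Polynomial k)) i).eval 0) with hB0def
  obtain ⟨μ, hμ⟩ := Module.End.exists_eigenvalue (Matrix.mulVecLin B0)
  obtain ⟨ev, hev⟩ := hμ.exists_hasEigenvector
  have heveq : B0.mulVec ev = μ • ev := by
    have := hev.apply_eq_smul
    rwa [Matrix.mulVecLin_apply] at this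
  refine ⟨μ, ?_⟩
  by_contra hcon
  push_neg at hcon
  obtain ⟨v0, hv0⟩ := hcon
  set φ' : V k N → V k N := fun v => φ v - μ • v with hφ'
  have hφ'add : ∀ v w, φ' (v + w) = φ' v + φ' w := by
    intro v w
    simp only [hφ', hadd, smul_add]
    abel
  have hφ'smul : ∀ (c : k) v, φ' (c • v) = c • φ' v := by
    intro c v
    simp only [hφ', hsmul, smul_sub, smul_comm c μ]
  have hφ'comm : ∀ s ∈ S, ∀ v, φ' (act k N s v) = act k N s (φ' v) := by
    intro s hs v
    simp only [hφ']
    rw [hcomm s hs, act_vsub, act_vsmul]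
  have hφ'ne : ∃ v, φ' v ≠ 0 := by
    refine ⟨v0, fun h => hv0 ?_⟩
    have := sub_eq_zero.mp h
    exact this
  -- Schur: φ' is injective
  have hker : ∀ v, φ' v = 0 → v = 0 := by
    intro v hv
    let K : Submodule k (V k N) :=
      { carrier := {u | φ' u = 0}
        add_mem' := by
          intro a b ha hb
          show φ' (a + b) = 0
          rw [hφ'add, ha, hb, add_zero]
        zero_mem' := by
          show φ' 0 = 0
          exact theta_zero φ' hφ'smul
        smul_mem' := by
          intro c a ha
          show φ' (c • a) = 0
          rw [hφ'smul, ha, smul_zero] }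
    have hKinv : ∀ a ∈ S, ∀ u ∈ K, act k N a u ∈ K := by
      intro a ha u hu
      show φ' (act k N a u) = 0
      rw [hφ'comm a ha, show φ' u = 0 from hu, act_vzero]
    rcases hirr K hKinv with hbot | htop
    · have : v ∈ K := hv
      rw [hbot] at this
      simpa using this
    · exfalso
      obtain ⟨u, hu⟩ := hφ'ne
      exact hu ((htop ▸ Submodule.mem_top : u ∈ K))
  have hinj : Function.Injective φ' := by
    intro a b hab
    have : φ' (a - b) = 0 := by
      rw [theta_sub φ' hφ'add hφ'smul, hab, sub_self]
    have := hker _ this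
    exact sub_eq_zero.mp this
  -- Schur: φ' is surjective
  have hsurj : Function.Surjective φ' := by
    let R : Submodule k (V k N) :=
      { carrier := {w | ∃ u, φ' u = w}
        add_mem' := by
          rintro a b ⟨u, hu⟩ ⟨w, hw⟩
          exact ⟨u + w, by rw [hφ'add, hu, hw]⟩
        zero_mem' := ⟨0, theta_zero φ' hφ'smul⟩
        smul_mem' := by
          rintro c a ⟨u, hu⟩
          exact ⟨c • u, by rw [hφ'smul, hu]⟩ }
    have hRinv : ∀ a ∈ S, ∀ u ∈ R, act k N a u ∈ R := by
      rintro a ha u ⟨w, rfl⟩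
      exact ⟨act k N a w, hφ'comm a ha w⟩
    rcases hirr R hRinv with hbot | htop
    · exfalso
      obtain ⟨u, hu⟩ := hφ'ne
      have : φ' u ∈ R := ⟨u, rfl⟩
      rw [hbot] at this
      exact hu (by simpa using this)
    · intro w
      exact (htop ▸ Submodule.mem_top : w ∈ R)
  set ψ : V k N → V k N := Function.invFun φ' with hψdef
  have hψright : ∀ w, φ' (ψ w) = w := fun w => Function.invFun_eq (hsurj w)
  have hψleft : ∀ v, ψ (φ' v) = v := fun v => Function.leftInverse_invFun hinj v
  have hψadd : ∀ v w, ψ (v + w) = ψ v + ψ w := by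
    intro v w
    apply hinj
    rw [hψright, hφ'add, hψright, hψright]
  have hψsmul : ∀ (c : k) v, ψ (c • v) = c • ψ v := by
    intro c v
    apply hinj
    rw [hψright, hφ'smul, hψright]
  have hψcomm : ∀ s ∈ S, ∀ v, ψ (act k N s v) = act k N s (ψ v) := by
    intro s hs v
    apply hinj
    rw [hψright, hφ'comm s hs, hψright]
  -- matrices of φ' and ψ
  set B' : Matrix (Fin N) (Fin N) (Polynomial k) :=
    Matrix.of (fun i j => φ' (Pi.single j (1 : Polynomial k)) i) with hB'def
  set Cm : Matrix (Fin N) (Fin N) (Polynomial k) :=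
    Matrix.of (fun i j => ψ (Pi.single j (1 : Polynomial k)) i) with hCmdef
  have hB'repr := comm_matrix_repr hN S hirr hpS φ' hφ'add hφ'smul hφ'comm
  have hCmrepr := comm_matrix_repr hN S hirr hpS ψ hψadd hψsmul hψcomm
  have hcomp : B' * Cm = 1 := by
    refine Matrix.ext (fun i l => ?_)
    have h1 : φ' (ψ (Pi.single l (1 : Polynomial k))) i
        = ∑ j, ψ (Pi.single l (1 : Polynomial k)) j * B' i j := hB'repr _ i
    have h2 : ∀ j, ψ (Pi.single l (1 : Polynomial k)) j = Cm j l := by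
      intro j
      have := hCmrepr (Pi.single l (1 : Polynomial k)) j
      rw [this, Finset.sum_eq_single l]
      · rw [Pi.single_eq_same, one_mul]
        rfl
      · intro b _ hb
        rw [Pi.single_eq_of_ne hb, zero_mul]
      · intro h; exact absurd (Finset.mem_univ l) h
    rw [hψright] at h1
    simp only [h2] at h1
    rw [Matrix.mul_apply]
    rw [show (1 : Matrix (Fin N) (Fin N) (Polynomial k)) i l
      = (Pi.single l (1 : Polynomial k) : V k N) i by
        rw [Matrix.one_apply, Pi.single_apply]]
    rw [h1]
    congr 1
    funext j
    rw [mul_comm]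
  -- evaluate at 0
  have hmap : (B'.map (Polynomial.evalRingHom (0:k))) * (Cm.map (Polynomial.evalRingHom (0:k)))
      = 1 := by
    rw [← Matrix.map_mul, hcomp, Matrix.map_one _ (map_zero _) (map_one _)]
  have hB'0 : B'.map (Polynomial.evalRingHom (0:k)) = B0 - μ • 1 := by
    refine Matrix.ext (fun i j => ?_)
    have hlhs : (B'.map (Polynomial.evalRingHom (0:k))) i j
        = Polynomial.eval 0 (φ (Pi.single j (1:Polynomial k)) i)
          - Polynomial.eval 0 ((μ • (Pi.single j (1:Polynomial k) : V k N)) i) := by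
      simp only [Matrix.map_apply, hB'def, Matrix.of_apply, hφ', Pi.sub_apply]
      rw [show ((Polynomial.evalRingHom (0:k)) : Polynomial k → k) = Polynomial.eval 0 from rfl,
        Polynomial.eval_sub]
    have h2 : Polynomial.eval 0 ((μ • (Pi.single j (1:Polynomial k) : V k N)) i)
        = if i = j then μ else 0 := by
      rw [Pi.smul_apply, Pi.single_apply]
      split <;> simp [Polynomial.smul_eq_C_mul]
    rw [hlhs, h2, Matrix.sub_apply, Matrix.smul_apply, Matrix.one_apply, hB0def]
    simp only [Matrix.of_apply]
    congr 1
    split <;> simp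
  have hflip : (Cm.map (Polynomial.evalRingHom (0:k))) * (B0 - μ • 1) = 1 := by
    rw [← hB'0]
    exact mul_eq_one_comm.mp hmap
  have hev0 : (B0 - μ • (1 : Matrix (Fin N) (Fin N) k)).mulVec ev = 0 := by
    rw [Matrix.sub_mulVec, heveq, Matrix.smul_mulVec, Matrix.one_mulVec, sub_self]
  have hev_zero : ev = 0 := by
    have h1 : (1 : Matrix (Fin N) (Fin N) k).mulVec ev = ev := Matrix.one_mulVec ev
    rw [← hflip, ← Matrix.mulVec_mulVec, hev0, Matrix.mulVec_zero] at h1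
    exact h1.symm
  exact hev.2 hev_zero

end Density
namespace Density

variable {k : Type*} [Field k] [CharZero k] {N : ℕ}

lemma act_vsum (a : MW k N) {ι : Type*} (s : Finset ι) (f : ι → V k N) :
    act k N a (∑ i ∈ s, f i) = ∑ i ∈ s, act k N a (f i) := by
  classical
  induction s using Finset.induction_on with
  | empty => simp [act_vzero]
  | insert b s h ih => rw [Finset.sum_insert h, Finset.sum_insert h, act_vadd, ih]

lemma mem_sub' {S : NonUnitalSubalgebra k (MW k N)} {a b : MW k N}
    (ha : a ∈ S) (hb : b ∈ S) : a - b ∈ S := by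
  have h1 : -b ∈ S := by
    have h0 := SMulMemClass.smul_mem (-1 : k) hb
    rwa [neg_one_smul k b] at h0
  have h2 := add_mem ha h1
  have h3 : a - b = a + -b := sub_eq_add_neg a b
  rw [h3]; exact h2

lemma jacobson_density [IsAlgClosed k] (hN : 0 < N) (S : NonUnitalSubalgebra k (MW k N))
    (hirr : ∀ U : Submodule k (V k N),
      (∀ a ∈ S, ∀ u ∈ U, act k N a u ∈ U) → U = ⊥ ∨ U = ⊤)
    (hpS : ∀ a ∈ S, pM k N * a ∈ S) :
    ∀ (m : ℕ) (v : Fin m → V k N), LinearIndependent k v →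
      ∀ w : Fin m → V k N, ∃ s ∈ S, ∀ i, act k N s (v i) = w i := by
  intro m
  induction m with
  | zero =>
      intro v _ w
      exact ⟨0, zero_mem S, fun i => i.elim0⟩
  | succ m ih =>
      intro v hv w
      classical
      set v' : Fin m → V k N := fun i => v i.castSucc with hv'def
      have hv' : LinearIndependent k v' := hv.comp Fin.castSucc (Fin.castSucc_injective m)
      set vl : V k N := v (Fin.last m) with hvl
      let T : Submodule k (V k N) :=
        { carrier := {u | ∃ a, (a ∈ S ∧ ∀ i : Fin m, act k N a (v' i) = 0)
            ∧ act k N a vl = u}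
          add_mem' := by
            rintro x y ⟨a, ⟨ha, haz⟩, rfl⟩ ⟨b, ⟨hb, hbz⟩, rfl⟩
            exact ⟨a + b, ⟨add_mem ha hb,
              fun i => by rw [act_add, haz i, hbz i, add_zero]⟩, act_add a b vl⟩
          zero_mem' := ⟨0, ⟨zero_mem S, fun i => act_zero _⟩, act_zero _⟩
          smul_mem' := by
            rintro cc x ⟨a, ⟨ha, haz⟩, rfl⟩
            exact ⟨cc • a, ⟨SMulMemClass.smul_mem cc ha,
              fun i => by rw [act_smul, haz i, smul_zero]⟩, act_smul cc a vl⟩ }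
      have hTmem : ∀ u, u ∈ T ↔ ∃ a, (a ∈ S ∧ ∀ i : Fin m, act k N a (v' i) = 0)
          ∧ act k N a vl = u := fun _ => Iff.rfl
      have hTinv : ∀ b ∈ S, ∀ u ∈ T, act k N b u ∈ T := by
        intro b hb u hu
        obtain ⟨a, ⟨ha, haz⟩, rfl⟩ := (hTmem u).mp hu
        exact (hTmem _).mpr ⟨b * a, ⟨mul_mem hb ha,
          fun i => by rw [act_mul, haz i, act_vzero]⟩, act_mul b a vl⟩
      rcases hirr T hTinv with hbot | htop
      · exfalso
        have hA : ∀ a ∈ S, (∀ i : Fin m, act k N a (v' i) = 0) → act k N a vl = 0 := by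
          intro a ha haz
          have : act k N a vl ∈ T := (hTmem _).mpr ⟨a, ⟨ha, haz⟩, rfl⟩
          rw [hbot] at this
          simpa using this
        have hwd : ∀ a b, a ∈ S → b ∈ S →
            (∀ i : Fin m, act k N a (v' i) = act k N b (v' i)) →
            act k N a vl = act k N b vl := by
          intro a b ha hb hab
          have h0 := hA (a - b) (mem_sub' ha hb)
            (fun i => by rw [act_sub, hab i, sub_self])
          rw [act_sub] at h0
          exact sub_eq_zero.mp h0
        have hsel : ∀ (i : Fin m) (w' : V k N), ∃ s, s ∈ S ∧
            ∀ j : Fin m, act k N s (v' j) = if j = i then w' else 0 := by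
          intro i w'
          obtain ⟨s, hs, hmatch⟩ := ih v' hv' (fun j => if j = i then w' else 0)
          exact ⟨s, hs, fun j => hmatch j⟩
        choose sel hselS hselval using hsel
        set Φ : Fin m → V k N → V k N := fun i w' => act k N (sel i w') vl with hΦ
        have hΦwd : ∀ (i : Fin m) (w' : V k N) (s : MW k N), s ∈ S →
            (∀ j, act k N s (v' j) = if j = i then w' else 0) →
            Φ i w' = act k N s vl := by
          intro i w' s hs hsv
          exact hwd _ _ (hselS i w') hs (fun j => by rw [hselval i w' j, hsv j])
        have hΦadd : ∀ i a b, Φ i (a + b) = Φ i a + Φ i b := by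
          intro i a b
          have h1 : Φ i (a + b) = act k N (sel i a + sel i b) vl := by
            apply hΦwd i (a + b) _ (add_mem (hselS i a) (hselS i b))
            intro j
            rw [act_add, hselval, hselval]
            split <;> simp
          rw [h1, act_add]
        have hΦsmul : ∀ i (cc : k) a, Φ i (cc • a) = cc • Φ i a := by
          intro i cc a
          have h1 : Φ i (cc • a) = act k N (cc • sel i a) vl := by
            apply hΦwd i _ _ (SMulMemClass.smul_mem cc (hselS i a))
            intro j
            rw [act_smul, hselval]
            split <;> simp
          rw [h1, act_smul]
        have hΦcomm : ∀ (i : Fin m), ∀ t ∈ S, ∀ a, Φ i (act k N t a) = act k N t (Φ i a) := by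
          intro i t ht a
          have h1 : Φ i (act k N t a) = act k N (t * sel i a) vl := by
            apply hΦwd i _ _ (mul_mem ht (hselS i a))
            intro j
            rw [act_mul, hselval]
            split
            · rfl
            · rw [act_vzero]
          rw [h1, act_mul]
        have hscal : ∀ i, ∃ cc : k, ∀ a, Φ i a = cc • a := fun i =>
          commutant_scalar hN S hirr hpS (Φ i) (hΦadd i) (hΦsmul i) (hΦcomm i)
        choose c hc using hscal
        have hkey : ∀ s ∈ S, act k N s vl = ∑ i, c i • act k N s (v' i) := by
          intro s hs
          set t : MW k N := ∑ i, sel i (act k N s (v' i)) with ht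
          have htS : t ∈ S := sum_mem (fun i _ => hselS i _)
          have hagree : ∀ j, act k N t (v' j) = act k N s (v' j) := by
            intro j
            rw [ht, act_sum]
            rw [Finset.sum_eq_single j]
            · rw [hselval]
              simp
            · intro b _ hb
              rw [hselval, if_neg (fun h => hb h.symm)]
            · intro h; exact absurd (Finset.mem_univ j) h
          have heq := hwd t s htS hs hagree
          rw [← heq, ht, act_sum]
          congr 1
          funext i
          rw [show act k N (sel i (act k N s (v' i))) vl = Φ i (act k N s (v' i)) from rfl,
            hc i]
        have hu : vl - ∑ i, c i • v' i = 0 := by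
          apply acts_faithful hN S hirr
          intro s hs
          rw [act_vsub, hkey s hs, act_vsum]
          have : ∀ i, act k N s (c i • v' i) = c i • act k N s (v' i) := fun i => act_vsmul s (c i) (v' i)
          simp only [this]
          rw [sub_self]
        have hdep : vl = ∑ i, c i • v' i := by rwa [sub_eq_zero] at hu
        set g : Fin (m + 1) → k := Fin.lastCases (-1) c with hg
        have hgsum : ∑ j, g j • v j = 0 := by
          rw [Fin.sum_univ_castSucc]
          have h1 : ∀ i : Fin m, g i.castSucc = c i := fun i => by
            rw [hg]; exact Fin.lastCases_castSucc ..
          have h2 : g (Fin.last m) = -1 := by rw [hg]; exact Fin.lastCases_last ..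
          simp only [h1, h2]
          rw [show (∑ i : Fin m, c i • v (Fin.castSucc i)) = vl from hdep.symm,
            neg_one_smul, ← hvl]
          simp
        have := Fintype.linearIndependent_iff.mp hv g hgsum (Fin.last m)
        rw [hg] at this
        rw [show (Fin.lastCases (-1) c : ∀ _ : Fin (m+1), k) (Fin.last m) = -1 from Fin.lastCases_last ..] at this
        norm_num at this
      · obtain ⟨s₀, hs₀, hs₀v⟩ := ih v' hv' (fun i => w i.castSucc)
        have hmem : w (Fin.last m) - act k N s₀ vl ∈ T := htop ▸ Submodule.mem_top
        obtain ⟨a, ⟨ha, haz⟩, hav⟩ := (hTmem _).mp hmem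
        refine ⟨s₀ + a, add_mem hs₀ ha, ?_⟩
        intro i
        induction i using Fin.lastCases with
        | last =>
            rw [← hvl, act_add, hav]
            abel
        | cast i =>
            rw [act_add]
            rw [show act k N s₀ (v i.castSucc) = w i.castSucc from hs₀v i,
              show act k N a (v i.castSucc) = 0 from haz i, add_zero]

end Density
namespace Density

variable {k : Type*} [Field k] [CharZero k] {N : ℕ}

lemma single_monomial_indep (n : ℕ) :
    LinearIndependent k (fun im : Fin N × Fin n =>
      (Pi.single im.1 ((X : Polynomial k) ^ (im.2 : ℕ)) : V k N)) := by
  classical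
  have hb := (Pi.basis (fun _ : Fin N => Polynomial.basisMonomials k)).linearIndependent
  have hinj : Function.Injective
      (fun im : Fin N × Fin n => (⟨im.1, (im.2 : ℕ)⟩ : Σ _ : Fin N, ℕ)) := by
    intro a b hab
    obtain ⟨h1, h2⟩ := Sigma.mk.inj_iff.mp hab
    have h2' : (a.2 : ℕ) = (b.2 : ℕ) := by
      simpa using h2
    exact Prod.ext h1 (Fin.ext h2')
  have hcomp := hb.comp
    (fun im : Fin N × Fin n => (⟨im.1, (im.2 : ℕ)⟩ : Σ _ : Fin N, ℕ)) hinj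
  have hfun : ((Pi.basis (fun _ : Fin N => Polynomial.basisMonomials k)) ∘
      (fun im : Fin N × Fin n => (⟨im.1, (im.2 : ℕ)⟩ : Σ _ : Fin N, ℕ)))
      = (fun im : Fin N × Fin n =>
        (Pi.single im.1 ((X : Polynomial k) ^ (im.2 : ℕ)) : V k N)) := by
    funext im
    rw [Function.comp_apply, Pi.basis_apply]
    congr 1
    rw [show (Polynomial.basisMonomials k) ((im.2 : ℕ))
        = Polynomial.monomial (im.2 : ℕ) (1 : k) from congrFun (Polynomial.coe_basisMonomials k) _,
      Polynomial.X_pow_eq_monomial]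
  rwa [hfun] at hcomp

end Density

theorem density_of_irreducible' {k : Type*} [Field k] [CharZero k] [IsAlgClosed k]
    (N : ℕ) (hN : 0 < N)
    (S : NonUnitalSubalgebra k (MW k N))
    (hpS : ∀ a ∈ S, pM k N * a ∈ S)
    (hirr : ∀ U : Submodule k (Fin N → Polynomial k),
      (∀ a ∈ S, ∀ u ∈ U, act k N a u ∈ U) → U = ⊥ ∨ U = ⊤) :
    ∀ (x : MW k N) (n : ℕ), ∃ s ∈ S, ∃ y : MW k N, x - s = y * qM k N ^ n := by
  intro x n
  classical
  set fam : Fin N × Fin n → Density.V k N :=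
    fun im => Pi.single im.1 ((X : Polynomial k) ^ (im.2 : ℕ)) with hfam
  have hind : LinearIndependent k fam := Density.single_monomial_indep n
  set e : Fin N × Fin n ≃ Fin (N * n) := finProdFinEquiv with he
  have hind' : LinearIndependent k (fam ∘ e.symm) := hind.comp e.symm e.symm.injective
  obtain ⟨s, hs, hmatch⟩ := Density.jacobson_density hN S hirr hpS (N * n)
    (fam ∘ e.symm) hind' (fun j => act k N x ((fam ∘ e.symm) j))
  have hkill : ∀ im : Fin N × Fin n, act k N (x - s) (fam im) = 0 := by
    intro im
    rw [Density.act_sub]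
    have h1 := hmatch (e im)
    rw [show (fam ∘ e.symm) (e im) = fam im by rw [Function.comp_apply, Equiv.symm_apply_apply]]
      at h1
    rw [h1, sub_self]
  have hent : ∀ i j : Fin N, ∀ m, m < n →
      (((x - s) i j : WeylA k) : Module.End k (Polynomial k)) (X ^ m) = 0 := by
    intro i j m hm
    have h2 := congrFun (hkill (j, ⟨m, hm⟩)) i
    rwa [hfam, Density.act_single] at h2
  obtain ⟨y, hy⟩ := Density.matrix_kills_imp_qpow n (x - s) hent
  exact ⟨s, hs, y, hy⟩

/-- Theorem 4.1.2: a `∂_q`-invariant subalgebra `S ⊆ M_N(W)` with `p·S ⊆ S`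
acting irreducibly on `V_N` is dense in `M_N(W)` in the `q`-topology. -/
theorem density_of_irreducible [IsAlgClosed k] (N : ℕ) (hN : 0 < N)
    (S : NonUnitalSubalgebra k (MW k N))
    (hdq : ∀ a ∈ S, dq k N a ∈ S)
    (hpS : ∀ a ∈ S, pM k N * a ∈ S)
    (hirr : ∀ U : Submodule k (Fin N → Polynomial k),
      (∀ a ∈ S, ∀ u ∈ U, act k N a u ∈ U) → U = ⊥ ∨ U = ⊤) :
    ∀ (x : MW k N) (n : ℕ), ∃ s ∈ S, ∃ y : MW k N, x - s = y * qM k N ^ n := by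
  exact density_of_irreducible' N hN S hpS hirr

end
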